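/- Additivity of upper envelopes under concatenation: let A ∈ (ℝⁿ)^{N+1} and B ∈ (ℝⁿ)^{M+1} with weights τ ∈ ℝ^{N+1} and σ ∈ ℝ^{M+1}. Let (A+B, τ⊕σ) be the family of all sums (a_i + b_j) with weights (τ_i + σ_j), for 0 ≤ i ≤ N, 0 ≤ j ≤ M. Then ϑ_{A+B, τ⊕σ} = ϑ_{A,τ} ⊞ ϑ_{B,σ} as functions on Q_A + Q_B. -/

import Mathlib

open Set Pointwise

/-- The polytope `Q_{A,τ}`: convex hull of the lifted points `(a_j, τ_j)` in `ℝⁿ × ℝ`. -/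
noncomputable def liftedPolytope {n : ℕ} {ι : Type*} (A : ι → (Fin n → ℝ)) (τ : ι → ℝ) :
    Set ((Fin n → ℝ) × ℝ) :=
  convexHull ℝ (Set.range fun j => (A j, τ j))

/-- The upper envelope function `ϑ_{A,τ}` over `Q_A = conv{a_j}`. -/
noncomputable def upperEnv {n : ℕ} {ι : Type*} (A : ι → (Fin n → ℝ)) (τ : ι → ℝ) :
    (Fin n → ℝ) → ℝ :=
  fun x => sSup {y : ℝ | (x, y) ∈ liftedPolytope A τ}

/-- Sup-convolution `f ⊞ g` of two functions with respect to domains `Q`, `R`. -/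
noncomputable def supConv {n : ℕ} (Q R : Set (Fin n → ℝ)) (f g : (Fin n → ℝ) → ℝ) :
    (Fin n → ℝ) → ℝ :=
  fun x => sSup {v | ∃ y ∈ Q, ∃ z ∈ R, y + z = x ∧ v = f y + g z}

lemma fst_image_lifted {n : ℕ} {ι : Type*} (A : ι → (Fin n → ℝ)) (τ : ι → ℝ) :
    Prod.fst '' liftedPolytope A τ = convexHull ℝ (Set.range A) := by
  rw [liftedPolytope,
    show (Prod.fst : (Fin n → ℝ) × ℝ → (Fin n → ℝ)) = ⇑(LinearMap.fst ℝ (Fin n → ℝ) ℝ) from rfl,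
    (LinearMap.fst ℝ (Fin n → ℝ) ℝ).image_convexHull]
  congr 1
  ext w
  simp [Set.range_comp]

section Aux

variable {n : ℕ} {ι : Type*} [Finite ι] (A : ι → (Fin n → ℝ)) (τ : ι → ℝ)

lemma lifted_compact : IsCompact (liftedPolytope A τ) :=
  (Set.finite_range _).isCompact_convexHull ℝ

omit [Finite ι] in
lemma slice_eq (y : Fin n → ℝ) :
    {t : ℝ | (y, t) ∈ liftedPolytope A τ}
      = Prod.snd '' (liftedPolytope A τ ∩ Prod.fst ⁻¹' {y}) := by
  ext t
  constructor
  · intro ht; exact ⟨(y, t), ⟨ht, rfl⟩, rfl⟩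
  · rintro ⟨⟨y', t'⟩, ⟨hm, hy⟩, rfl⟩
    simp only [mem_preimage, mem_singleton_iff] at hy
    subst hy; exact hm

lemma slice_compact (y : Fin n → ℝ) :
    IsCompact {t : ℝ | (y, t) ∈ liftedPolytope A τ} := by
  rw [slice_eq]
  exact (((lifted_compact A τ).inter_right (isClosed_singleton.preimage continuous_fst)).image
    continuous_snd)

omit [Finite ι] in
lemma slice_nonempty [Nonempty ι] {y : Fin n → ℝ} (hy : y ∈ convexHull ℝ (Set.range A)) :
    {t : ℝ | (y, t) ∈ liftedPolytope A τ}.Nonempty := by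
  rw [← fst_image_lifted A τ] at hy
  obtain ⟨⟨y', t⟩, hm, hy'⟩ := hy
  exact ⟨t, by simpa [← hy'] using hm⟩

lemma le_upperEnv {y : Fin n → ℝ} {t : ℝ} (ht : (y, t) ∈ liftedPolytope A τ) :
    t ≤ upperEnv A τ y :=
  le_csSup (slice_compact A τ y).bddAbove ht

lemma upperEnv_mem [Nonempty ι] {y : Fin n → ℝ} (hy : y ∈ convexHull ℝ (Set.range A)) :
    (y, upperEnv A τ y) ∈ liftedPolytope A τ :=
  (slice_compact A τ y).sSup_mem (slice_nonempty A τ hy)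

end Aux

lemma lifted_concat {n N M : ℕ}
    (A : Fin (N + 1) → (Fin n → ℝ)) (B : Fin (M + 1) → (Fin n → ℝ))
    (τ : Fin (N + 1) → ℝ) (σ : Fin (M + 1) → ℝ) :
    liftedPolytope (fun p : Fin (N + 1) × Fin (M + 1) => A p.1 + B p.2)
        (fun p => τ p.1 + σ p.2)
      = liftedPolytope A τ + liftedPolytope B σ := by
  rw [liftedPolytope, liftedPolytope, liftedPolytope, ← convexHull_add]
  congr 1
  ext w
  constructor
  · rintro ⟨⟨i, j⟩, rfl⟩
    exact ⟨(A i, τ i), ⟨i, rfl⟩, (B j, σ j), ⟨j, rfl⟩, rfl⟩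
  · rintro ⟨_, ⟨i, rfl⟩, _, ⟨j, rfl⟩, rfl⟩
    exact ⟨(i, j), rfl⟩

theorem upperEnv_concat {n N M : ℕ}
    (A : Fin (N + 1) → (Fin n → ℝ)) (B : Fin (M + 1) → (Fin n → ℝ))
    (τ : Fin (N + 1) → ℝ) (σ : Fin (M + 1) → ℝ) :
    ∀ x ∈ convexHull ℝ (Set.range A) + convexHull ℝ (Set.range B),
      upperEnv (fun p : Fin (N + 1) × Fin (M + 1) => A p.1 + B p.2)
          (fun p => τ p.1 + σ p.2) x
        = supConv (convexHull ℝ (Set.range A)) (convexHull ℝ (Set.range B))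
            (upperEnv A τ) (upperEnv B σ) x := by
  rintro x ⟨y₀, hy₀, z₀, hz₀, rfl⟩
  set x := y₀ + z₀
  set S1 : Set ℝ := {t | (x, t) ∈ liftedPolytope
    (fun p : Fin (N + 1) × Fin (M + 1) => A p.1 + B p.2) (fun p => τ p.1 + σ p.2)} with hS1
  set S2 : Set ℝ := {v | ∃ y ∈ convexHull ℝ (Set.range A), ∃ z ∈ convexHull ℝ (Set.range B),
    y + z = x ∧ v = upperEnv A τ y + upperEnv B σ z} with hS2
  have hsub : S2 ⊆ S1 := by
    rintro v ⟨y, hy, z, hz, hyz, rfl⟩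
    show _ ∈ liftedPolytope _ _
    rw [lifted_concat]
    refine ⟨(y, upperEnv A τ y), upperEnv_mem A τ hy, (z, upperEnv B σ z), upperEnv_mem B σ hz, ?_⟩
    simp [Prod.ext_iff, hyz]
  have hne2 : S2.Nonempty := ⟨_, y₀, hy₀, z₀, hz₀, rfl, rfl⟩
  have hbdd1 : BddAbove S1 := (slice_compact _ _ x).bddAbove
  have hdom : ∀ t ∈ S1, ∃ v ∈ S2, t ≤ v := by
    intro t ht
    have ht' : (x, t) ∈ liftedPolytope A τ + liftedPolytope B σ := by
      rw [← lifted_concat]; exact ht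
    obtain ⟨⟨y, u⟩, hu, ⟨z, w⟩, hw, hsum⟩ := ht'
    have hxy : y + z = x := congrArg Prod.fst hsum
    have htw : u + w = t := congrArg Prod.snd hsum
    have hyQ : y ∈ convexHull ℝ (Set.range A) := by
      rw [← fst_image_lifted A τ]; exact ⟨_, hu, rfl⟩
    have hzQ : z ∈ convexHull ℝ (Set.range B) := by
      rw [← fst_image_lifted B σ]; exact ⟨_, hw, rfl⟩
    refine ⟨_, ⟨y, hyQ, z, hzQ, hxy, rfl⟩, ?_⟩
    rw [← htw]
    exact add_le_add (le_upperEnv A τ hu) (le_upperEnv B σ hw)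
  refine le_antisymm ?_ (csSup_le_csSup hbdd1 hne2 hsub)
  refine csSup_le (hne2.mono hsub) ?_
  intro t ht
  obtain ⟨v, hv, htv⟩ := hdom t ht
  exact htv.trans (le_csSup (hbdd1.mono hsub) hv)
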